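/- Let k be a positive integer and b ∈ (0,1]. Let A_1, …, A_n be pairwise independent events with Σ_{j=1}^n Pr[A_j] ≤ b·k. Then for every i ∈ [n] with Pr[A_i] > 0, the conditional probability Pr[ Σ_{j ≠ i} 1_{A_j} ≥ k | A_i ] ≤ b. -/
import Mathlib


open MeasureTheory ENNReal

/-- For pairwise independent events `A j` with `∑ Pr[A j] ≤ b·k`,
for every `i` with `Pr[A i] > 0`,
`Pr[ #{j ≠ i : A j occurs} ≥ k | A i ] ≤ b`. -/
theorem stmt_2 {Ω : Type*} [MeasurableSpace Ω] (μ : Measure Ω) [IsProbabilityMeasure μ]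
    (n k : ℕ) (hk : 0 < k) (b : ℝ) (hb0 : 0 < b) (hb1 : b ≤ 1)
    (A : Fin n → Set Ω) (hA : ∀ i, MeasurableSet (A i))
    (hpair : ∀ i j, i ≠ j → μ (A i ∩ A j) = μ (A i) * μ (A j))
    (hsum : ∑ j, (μ (A j)).toReal ≤ b * k)
    (i : Fin n) (hi : 0 < (μ (A i)).toReal) :
    (μ ({ω | k ≤ Set.ncard {j : Fin n | j ≠ i ∧ ω ∈ A j}} ∩ A i)).toReal
      / (μ (A i)).toReal ≤ b := by
  classical
  set T : Finset (Fin n) := Finset.univ.filter (fun j => j ≠ i) with hT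
  set f : Ω → ℕ := fun ω => ∑ j ∈ T, if ω ∈ A j then 1 else 0 with hf
  have hfmeas : Measurable f := by
    apply Finset.measurable_sum
    intro j _
    exact Measurable.ite (hA j) measurable_const measurable_const
  have hScard : ∀ ω, Set.ncard {j : Fin n | j ≠ i ∧ ω ∈ A j} = f ω := by
    intro ω
    rw [Set.ncard_eq_toFinset_card']
    simp only [hf]
    rw [← Finset.card_filter]
    congr 1
    ext j
    simp [hT, and_comm]
  set S : Set Ω := {ω | k ≤ f ω} with hS
  have hSeq : {ω | k ≤ Set.ncard {j : Fin n | j ≠ i ∧ ω ∈ A j}} = S := by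
    ext ω; simp [hS, hScard ω]
  rw [hSeq]
  have hSmeas : MeasurableSet S := measurableSet_le measurable_const hfmeas
  have key : (k : ℝ≥0∞) * μ (S ∩ A i) ≤ ∑ j ∈ T, μ (A j) * μ (A i) := by
    have h1 : (k : ℝ≥0∞) * μ (S ∩ A i) = ∫⁻ ω in S ∩ A i, (k : ℝ≥0∞) ∂μ := by
      rw [setLIntegral_const, mul_comm]
    have hcast : Measurable fun ω => (f ω : ℝ≥0∞) :=
      (measurable_from_top).comp hfmeas
    have h2 : ∫⁻ ω in S ∩ A i, (k : ℝ≥0∞) ∂μ ≤ ∫⁻ ω in S ∩ A i, (f ω : ℝ≥0∞) ∂μ := by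
      apply setLIntegral_mono hcast
      intro ω hω
      exact_mod_cast Nat.cast_le.mpr hω.1
    have h3 : ∫⁻ ω in S ∩ A i, (f ω : ℝ≥0∞) ∂μ ≤ ∫⁻ ω in A i, (f ω : ℝ≥0∞) ∂μ :=
      lintegral_mono' (Measure.restrict_mono Set.inter_subset_right le_rfl) le_rfl
    have h4 : ∫⁻ ω in A i, (f ω : ℝ≥0∞) ∂μ = ∑ j ∈ T, μ (A j ∩ A i) := by
      have : ∀ ω, (f ω : ℝ≥0∞) = ∑ j ∈ T, (A j).indicator (fun _ => (1:ℝ≥0∞)) ω := by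
        intro ω
        simp [hf, Set.indicator_apply]
      simp_rw [this]
      rw [lintegral_finset_sum]
      · refine Finset.sum_congr rfl fun j _ => ?_
        rw [lintegral_indicator (hA j), setLIntegral_one, Measure.restrict_apply (hA j)]
      · intro j _
        exact (measurable_const.indicator (hA j))
    have h5 : ∑ j ∈ T, μ (A j ∩ A i) = ∑ j ∈ T, μ (A j) * μ (A i) := by
      refine Finset.sum_congr rfl fun j hj => ?_
      rw [hT] at hj
      exact hpair j i (Finset.mem_filter.mp hj).2
    calc (k : ℝ≥0∞) * μ (S ∩ A i) = _ := h1
      _ ≤ _ := h2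
      _ ≤ _ := h3
      _ = _ := h4
      _ = _ := h5
  -- pass to reals
  have hfin : ∀ s : Set Ω, μ s ≠ ⊤ := fun s => (measure_lt_top μ s).ne
  have keyR : (k : ℝ) * (μ (S ∩ A i)).toReal ≤ ∑ j ∈ T, (μ (A j)).toReal * (μ (A i)).toReal := by
    have := ENNReal.toReal_mono (by
      refine (ENNReal.sum_lt_top.2 ?_).ne
      intro j _
      exact ENNReal.mul_lt_top (measure_lt_top μ _) (measure_lt_top μ _)) key
    rw [ENNReal.toReal_sum (fun j _ => ENNReal.mul_ne_top (hfin _) (hfin _))] at this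
    simp only [ENNReal.toReal_mul, ENNReal.toReal_natCast] at this
    exact this
    -- keep toReal_mul within sum
  have hsumT : ∑ j ∈ T, (μ (A j)).toReal ≤ b * k := by
    refine le_trans (Finset.sum_le_sum_of_subset_of_nonneg (Finset.subset_univ T) ?_) hsum
    intro j _ _
    exact ENNReal.toReal_nonneg
  have hmain : (μ (S ∩ A i)).toReal ≤ b * (μ (A i)).toReal := by
    have h6 : (k : ℝ) * (μ (S ∩ A i)).toReal ≤ (b * k) * (μ (A i)).toReal := by
      calc (k : ℝ) * (μ (S ∩ A i)).toReal
          ≤ ∑ j ∈ T, (μ (A j)).toReal * (μ (A i)).toReal := keyR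
        _ = (∑ j ∈ T, (μ (A j)).toReal) * (μ (A i)).toReal := by rw [Finset.sum_mul]
        _ ≤ (b * k) * (μ (A i)).toReal := by
            exact mul_le_mul_of_nonneg_right hsumT ENNReal.toReal_nonneg
    have hk' : (0 : ℝ) < k := by exact_mod_cast hk
    nlinarith [h6]
  rw [div_le_iff₀ hi]
  linarith [hmain]
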